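/- Let A be a complete filtered algebra over a field K of characteristic zero, R : A → A a K-linear map preserving the filtration, R̃ := id_A − R, and let χ : A₁ → A₁ be the unique map with (χ − id)(Aₙ) ⊆ A₂ₙ for all n ≥ 1 and exp(R(χ(x)))·exp(R̃(χ(x))) = exp(x) for all x ∈ A₁. Then χ satisfies the simplified recursion χ(x) = R(χ(x)) + log(exp(−R(χ(x)))·exp(x)) for all x ∈ A₁. -/

import Mathlib

open scoped Classical

/-- A complete filtered algebra over a field `K` of characteristic zero: an associative unital
`K`-algebra `A` with a decreasing filtration `A = F 0 ⊇ F 1 ⊇ ⋯` by (two-sided, here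
`K`-submodules closed under multiplication in the filtered sense) ideals, which is separated
and complete: every series `Σ aₙ` with `aₙ ∈ F n` converges (has a limit in the filtration
topology). -/
structure CompleteFilteredAlgebra (K A : Type*) [Field K] [CharZero K] [Ring A] [Algebra K A] where
  F : ℕ → Submodule K A
  F_zero : F 0 = ⊤
  F_succ_le : ∀ n : ℕ, F (n + 1) ≤ F n
  F_mul : ∀ m n : ℕ, ∀ x ∈ F m, ∀ y ∈ F n, x * y ∈ F (m + n)
  F_sep : ∀ x : A, (∀ n : ℕ, x ∈ F n) → x = 0
  F_complete : ∀ a : ℕ → A, (∀ n : ℕ, a n ∈ F n) →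
    ∃ s : A, ∀ N : ℕ, s - ∑ n ∈ Finset.range N, a n ∈ F N

namespace CompleteFilteredAlgebra

variable {K A : Type*} [Field K] [CharZero K] [Ring A] [Algebra K A]

/-- The exponential `exp x = Σ_{n≥0} xⁿ/n!`, defined (as the limit of its partial sums) for
every `x ∈ F 1`; junk value `0` elsewhere. -/
noncomputable def exp (FA : CompleteFilteredAlgebra K A) (x : A) : A :=
  if h : ∀ n : ℕ, ((n.factorial : K)⁻¹ • x ^ n) ∈ FA.F n then
    Classical.choose (FA.F_complete _ h)
  else 0

/-- The logarithm `log (1 + y) = Σ_{n≥1} (-1)^(n-1) yⁿ/n`, defined (as the limit of its partial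
sums) whenever the argument lies in `1 + F 1`; junk value `0` elsewhere. (The `n = 0` term of
the defining sequence is `0` since `1/0 = 0` in `K`.) -/
noncomputable def log (FA : CompleteFilteredAlgebra K A) (y : A) : A :=
  if h : ∀ n : ℕ, ((((-1 : K) ^ (n - 1)) / (n : K)) • (y - 1) ^ n) ∈ FA.F n then
    Classical.choose (FA.F_complete _ h)
  else 0

end CompleteFilteredAlgebra

section PowerSeriesAux
open PowerSeries Finset
variable {K : Type*} [Field K] [CharZero K]

lemma derivExp : d⁄dX K (PowerSeries.exp K) = PowerSeries.exp K := by
  ext n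
  rw [PowerSeries.coeff_derivative, PowerSeries.coeff_exp, PowerSeries.coeff_exp]
  have : ((n : K) + 1) = algebraMap ℚ K ((n : ℚ) + 1) := by push_cast; ring
  rw [this, ← map_mul]
  congr 1
  rw [Nat.factorial_succ]
  push_cast
  have h1 : ((n : ℚ) + 1) ≠ 0 := by positivity
  have h2 : ((n.factorial : ℚ)) ≠ 0 := by positivity
  field_simp

/-- coefficient of `X^m` in `(exp - 1)^n` -/
noncomputable def aCoeff (K : Type*) [Field K] [CharZero K] (m n : ℕ) : K :=
  PowerSeries.coeff m ((PowerSeries.exp K - 1) ^ n)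

lemma aCoeff_zero_right (m : ℕ) : aCoeff K m 0 = if m = 0 then 1 else 0 := by
  simp [aCoeff, PowerSeries.coeff_one]

lemma X_dvd_E : (X : K⟦X⟧) ∣ (PowerSeries.exp K - 1) := by
  rw [PowerSeries.X_dvd_iff]
  simp [PowerSeries.constantCoeff_exp]

lemma aCoeff_vanish {m n : ℕ} (h : m < n) : aCoeff K m n = 0 := by
  have : (X : K⟦X⟧) ^ n ∣ (PowerSeries.exp K - 1) ^ n := pow_dvd_pow_of_dvd X_dvd_E n
  exact (PowerSeries.X_pow_dvd_iff.mp this) m h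

lemma aCoeff_rec (m n : ℕ) :
    aCoeff K (m + 1) (n + 1) * (m + 1) = (n + 1) * (aCoeff K m (n + 1) + aCoeff K m n) := by
  have hD : d⁄dX K ((PowerSeries.exp K - 1) ^ (n + 1))
      = (n + 1) • ((PowerSeries.exp K - 1) ^ (n + 1) + (PowerSeries.exp K - 1) ^ n) := by
    rw [Derivation.leibniz_pow]
    have hdE : d⁄dX K (PowerSeries.exp K - 1) = PowerSeries.exp K := by
      rw [map_sub, derivExp, Derivation.map_one_eq_zero, sub_zero]
    rw [hdE, Nat.add_sub_cancel, smul_eq_mul]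
    congr 1
    ring
  have := congrArg (fun f => PowerSeries.coeff m f) hD
  simp only [PowerSeries.coeff_derivative] at this
  rw [aCoeff, aCoeff, aCoeff]
  rw [show ((PowerSeries.coeff (m+1)) ((PowerSeries.exp K - 1)^(n+1)) * (↑m+1) : K)
      = (PowerSeries.coeff (m+1)) ((PowerSeries.exp K - 1)^(n+1)) * ((m:K)+1) from rfl] at this ⊢
  rw [this]
  rw [map_nsmul, map_add]
  push_cast
  ring

/-- the log coefficients, matching the junk-at-0 convention of the statement -/
noncomputable def cCoeff (K : Type*) [Field K] [CharZero K] (n : ℕ) : K :=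
  ((-1 : K) ^ (n - 1)) / (n : K)

lemma cCoeff_zero : cCoeff K 0 = 0 := by simp [cCoeff]

lemma cCoeff_succ_mul (n : ℕ) : cCoeff K (n + 1) * ((n : K) + 1) = (-1 : K) ^ n := by
  have h : ((n : K) + 1) ≠ 0 := Nat.cast_add_one_ne_zero n
  rw [cCoeff]
  push_cast
  field_simp

lemma T_lemma (m : ℕ) :
    ∑ n ∈ range (m + 1), cCoeff K n * aCoeff K m n = if m = 1 then 1 else 0 := by
  induction m with
  | zero => simp [cCoeff_zero]
  | succ m _ =>
    have hm1 : ((m : K) + 1) ≠ 0 := Nat.cast_add_one_ne_zero m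
    rw [Finset.sum_range_succ']
    simp only [cCoeff_zero, zero_mul, add_zero]
    have hterm : ∀ n, cCoeff K (n + 1) * aCoeff K (m + 1) (n + 1)
        = ((-1 : K) ^ n * (aCoeff K m (n + 1) + aCoeff K m n)) / ((m : K) + 1) := by
      intro n
      have hrec := aCoeff_rec (K := K) m n
      have hn1 : ((n : K) + 1) ≠ 0 := Nat.cast_add_one_ne_zero n
      have ha : aCoeff K (m + 1) (n + 1)
          = ((n : K) + 1) * (aCoeff K m (n + 1) + aCoeff K m n) / ((m : K) + 1) := by
        field_simp
        linear_combination hrec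
      rw [ha, ← cCoeff_succ_mul (K := K) n]
      field_simp
    rw [Finset.sum_congr rfl (fun n _ => hterm n), ← Finset.sum_div]
    have htel : ∑ n ∈ range (m + 1), (-1 : K) ^ n * (aCoeff K m (n + 1) + aCoeff K m n)
        = ∑ n ∈ range (m + 1),
            (((-1 : K) ^ n * aCoeff K m n) - ((-1 : K) ^ (n+1) * aCoeff K m (n + 1))) := by
      apply Finset.sum_congr rfl
      intro n _
      ring
    rw [htel, Finset.sum_range_sub']
    simp only [pow_zero, one_mul, aCoeff_zero_right]
    rw [aCoeff_vanish (Nat.lt_succ_self m)]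
    by_cases hm : m = 0
    · subst hm; norm_num
    · simp only [hm, if_neg (by omega : ¬ m + 1 = 1)]
      simp [hm]

end PowerSeriesAux

namespace CompleteFilteredAlgebra

variable {K A : Type*} [Field K] [CharZero K] [Ring A] [Algebra K A]

variable (FA : CompleteFilteredAlgebra K A)

lemma F_mono : ∀ {m n : ℕ}, m ≤ n → FA.F n ≤ FA.F m := by
  intro m n h
  induction h with
  | refl => exact le_rfl
  | step h ih => exact le_trans (FA.F_succ_le _) ih

lemma mem_top' (x : A) : x ∈ FA.F 0 := by rw [FA.F_zero]; trivial

lemma mul_mem_F {m n : ℕ} {x y : A} (hx : x ∈ FA.F m) (hy : y ∈ FA.F n) :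
    x * y ∈ FA.F (m + n) := FA.F_mul m n x hx y hy

lemma mul_mem_left {n : ℕ} {x y : A} (hy : y ∈ FA.F n) : x * y ∈ FA.F n := by
  have := FA.mul_mem_F (FA.mem_top' x) hy
  rwa [zero_add] at this

lemma mul_mem_right {n : ℕ} {x y : A} (hx : x ∈ FA.F n) : x * y ∈ FA.F n := by
  have := FA.mul_mem_F hx (FA.mem_top' y)
  rwa [add_zero] at this

lemma pow_mem_F {x : A} (hx : x ∈ FA.F 1) (n : ℕ) : x ^ n ∈ FA.F n := by
  induction n with
  | zero => simpa using FA.mem_top' 1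
  | succ n ih =>
    have := FA.F_mul n 1 _ ih x hx
    rwa [← pow_succ] at this

/-- uniqueness of limits -/
lemma sum_unique {a : ℕ → A} {s t : A}
    (hs : ∀ N, s - ∑ n ∈ Finset.range N, a n ∈ FA.F N)
    (ht : ∀ N, t - ∑ n ∈ Finset.range N, a n ∈ FA.F N) : s = t := by
  have : ∀ N, s - t ∈ FA.F N := by
    intro N
    have := Submodule.sub_mem _ (hs N) (ht N)
    simpa using this
  exact sub_eq_zero.mp (FA.F_sep (s - t) this)



lemma expCoeffMem {x : A} (hx : x ∈ FA.F 1) (n : ℕ) :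
    ((n.factorial : K)⁻¹ • x ^ n) ∈ FA.F n :=
  Submodule.smul_mem _ _ (FA.pow_mem_F hx n)

lemma exp_spec {x : A} (hx : x ∈ FA.F 1) :
    ∀ N, FA.exp x - ∑ n ∈ Finset.range N, ((n.factorial : K)⁻¹ • x ^ n) ∈ FA.F N := by
  rw [exp, dif_pos (FA.expCoeffMem hx)]
  exact Classical.choose_spec (FA.F_complete _ (FA.expCoeffMem hx))

lemma exp_sub_one_mem {x : A} (hx : x ∈ FA.F 1) : FA.exp x - 1 ∈ FA.F 1 := by
  have := FA.exp_spec hx 1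
  simpa using this

lemma logCoeffMem {y : A} (hy : y - 1 ∈ FA.F 1) (n : ℕ) :
    ((((-1 : K) ^ (n - 1)) / (n : K)) • (y - 1) ^ n) ∈ FA.F n :=
  Submodule.smul_mem _ _ (FA.pow_mem_F hy n)

lemma log_spec {y : A} (hy : y - 1 ∈ FA.F 1) :
    ∀ N, FA.log y - ∑ n ∈ Finset.range N,
      ((((-1 : K) ^ (n - 1)) / (n : K)) • (y - 1) ^ n) ∈ FA.F N := by
  rw [log, dif_pos (FA.logCoeffMem hy)]
  exact Classical.choose_spec (FA.F_complete _ (FA.logCoeffMem hy))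

/-- Cauchy product of two convergent series. -/
lemma sum_mul {a b : ℕ → A} {s t : A}
    (ha : ∀ n, a n ∈ FA.F n) (hb : ∀ n, b n ∈ FA.F n)
    (hs : ∀ N, s - ∑ n ∈ Finset.range N, a n ∈ FA.F N)
    (ht : ∀ N, t - ∑ n ∈ Finset.range N, b n ∈ FA.F N) :
    ∀ N, s * t - ∑ n ∈ Finset.range N,
      (∑ ij ∈ Finset.HasAntidiagonal.antidiagonal n, a ij.1 * b ij.2) ∈ FA.F N := by
  intro N
  set Pa := ∑ n ∈ Finset.range N, a n with hPa
  set Pb := ∑ n ∈ Finset.range N, b n with hPb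
  have h1 : s * t - Pa * Pb ∈ FA.F N := by
    have : s * t - Pa * Pb = (s - Pa) * t + Pa * (t - Pb) := by noncomm_ring
    rw [this]
    exact Submodule.add_mem _ (FA.mul_mem_right (hs N)) (FA.mul_mem_left (ht N))
  have h2 : Pa * Pb - ∑ n ∈ Finset.range N,
      (∑ ij ∈ Finset.HasAntidiagonal.antidiagonal n, a ij.1 * b ij.2) ∈ FA.F N := by
    have hprod : Pa * Pb = ∑ ij ∈ Finset.range N ×ˢ Finset.range N, a ij.1 * b ij.2 := by
      rw [hPa, hPb, Finset.sum_mul_sum, Finset.sum_product]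
    have htri : ∑ n ∈ Finset.range N, (∑ ij ∈ Finset.HasAntidiagonal.antidiagonal n, a ij.1 * b ij.2)
        = ∑ ij ∈ (Finset.range N ×ˢ Finset.range N).filter (fun p => p.1 + p.2 < N),
            a ij.1 * b ij.2 := by
      rw [← Finset.sum_biUnion]
      · apply Finset.sum_congr
        · ext p
          simp only [Finset.mem_biUnion, Finset.HasAntidiagonal.mem_antidiagonal, Finset.mem_filter,
            Finset.mem_product, Finset.mem_range]
          constructor
          · rintro ⟨n, hn, rfl⟩; omega
          · rintro ⟨⟨h1, h2⟩, h3⟩; exact ⟨p.1 + p.2, h3, rfl⟩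
        · intros; rfl
      · intro i hi j hj hij
        simp only [Finset.disjoint_left, Finset.HasAntidiagonal.mem_antidiagonal]
        intro p hp hq
        exact hij (by omega)
    rw [hprod, htri, ← Finset.sum_filter_add_sum_filter_not
      (Finset.range N ×ˢ Finset.range N) (fun p => p.1 + p.2 < N) (fun p => a p.1 * b p.2)]
    rw [add_sub_cancel_left]
    apply Submodule.sum_mem
    intro p hp
    simp only [Finset.mem_filter, Finset.mem_product, Finset.mem_range, not_lt] at hp
    exact F_mono FA hp.2 (FA.mul_mem_F (ha p.1) (hb p.2))
  have := Submodule.add_mem _ h1 h2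
  simpa using this


lemma alt_sum_factorial (n : ℕ) :
    ∑ i ∈ Finset.range (n + 1),
      ((i.factorial : K)⁻¹ * (-1 : K) ^ i * (((n - i).factorial : K))⁻¹)
      = if n = 0 then 1 else 0 := by
  have hint := Int.alternating_sum_range_choose (n := n)
  have hK : ∑ i ∈ Finset.range (n + 1), ((-1 : K) ^ i * (n.choose i : K))
      = if n = 0 then 1 else 0 := by
    have := congrArg (fun z : ℤ => (z : K)) hint
    push_cast at this
    convert this using 2 <;> simp
  have hterm : ∀ i ∈ Finset.range (n + 1),
      ((i.factorial : K)⁻¹ * (-1 : K) ^ i * (((n - i).factorial : K))⁻¹)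
        = ((-1 : K) ^ i * (n.choose i : K)) * ((n.factorial : K))⁻¹ := by
    intro i hi
    have hin : i ≤ n := by simpa [Nat.lt_succ_iff] using hi
    have key : ((n.choose i : K)) * (i.factorial : K) * (((n - i).factorial : K))
        = (n.factorial : K) := by
      exact_mod_cast congrArg (Nat.cast : ℕ → K)
        (Nat.choose_mul_factorial_mul_factorial hin)
    have h1 : (i.factorial : K) ≠ 0 := Nat.cast_ne_zero.mpr i.factorial_ne_zero
    have h2 : (((n - i).factorial : K)) ≠ 0 := Nat.cast_ne_zero.mpr (n - i).factorial_ne_zero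
    have h3 : ((n.factorial : K)) ≠ 0 := Nat.cast_ne_zero.mpr n.factorial_ne_zero
    field_simp
    linear_combination -key
  rw [Finset.sum_congr rfl hterm, ← Finset.sum_mul, hK]
  by_cases hn : n = 0 <;> simp [hn]

lemma exp_neg_mul_exp {u : A} (hu : u ∈ FA.F 1) : FA.exp (-u) * FA.exp u = 1 := by
  have hnu : -u ∈ FA.F 1 := Submodule.neg_mem _ hu
  have hcauchy := FA.sum_mul (FA.expCoeffMem hnu) (FA.expCoeffMem hu)
    (FA.exp_spec hnu) (FA.exp_spec hu)
  have hcoeff : ∀ n : ℕ, (∑ ij ∈ Finset.HasAntidiagonal.antidiagonal n,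
      ((ij.1.factorial : K)⁻¹ • (-u) ^ ij.1) * ((ij.2.factorial : K)⁻¹ • u ^ ij.2))
      = if n = 0 then (1 : A) else 0 := by
    intro n
    rw [Finset.Nat.sum_antidiagonal_eq_sum_range_succ_mk]
    have hterm : ∀ i ∈ Finset.range (n + 1),
        ((i.factorial : K)⁻¹ • (-u) ^ i) * (((n - i).factorial : K)⁻¹ • u ^ (n - i))
        = ((i.factorial : K)⁻¹ * (-1 : K) ^ i * (((n - i).factorial : K))⁻¹) • u ^ n := by
      intro i hi
      have hin : i ≤ n := by simpa [Nat.lt_succ_iff] using hi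
      have hneg : (-u) ^ i = ((-1 : K) ^ i) • u ^ i := by
        rw [← smul_pow, neg_one_smul]
      rw [hneg, smul_smul, smul_mul_smul_comm, ← pow_add, Nat.add_sub_cancel' hin]
    rw [Finset.sum_congr rfl hterm, ← Finset.sum_smul, alt_sum_factorial]
    by_cases hn : n = 0 <;> simp [hn]
  have hone : ∀ N : ℕ, FA.exp (-u) * FA.exp u - 1 ∈ FA.F N := by
    intro N
    rcases Nat.eq_zero_or_pos N with hN | hN
    · rw [hN]; exact FA.mem_top' _
    · have := hcauchy N
      have hsum : ∑ n ∈ Finset.range N, (∑ ij ∈ Finset.HasAntidiagonal.antidiagonal n,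
          ((ij.1.factorial : K)⁻¹ • (-u) ^ ij.1) * ((ij.2.factorial : K)⁻¹ • u ^ ij.2))
          = 1 := by
        rw [Finset.sum_congr rfl (fun n _ => hcoeff n)]
        rw [Finset.sum_ite_eq' (Finset.range N) 0 (fun _ => (1 : A))]
        simp [Finset.mem_range, hN]
      rwa [hsum] at this
  exact sub_eq_zero.mp (FA.F_sep _ hone)

end CompleteFilteredAlgebra

namespace CompleteFilteredAlgebra

variable {K A : Type*} [Field K] [CharZero K] [Ring A] [Algebra K A]
variable (FA : CompleteFilteredAlgebra K A)

lemma sub_pow_mem {a b : A} {N : ℕ} (h : a - b ∈ FA.F N) :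
    ∀ n : ℕ, a ^ n - b ^ n ∈ FA.F N := by
  intro n
  induction n with
  | zero => simp
  | succ n ih =>
    have hid : a ^ (n + 1) - b ^ (n + 1) = a ^ n * (a - b) + (a ^ n - b ^ n) * b := by
      noncomm_ring
    rw [hid]
    exact Submodule.add_mem _ (FA.mul_mem_left h) (FA.mul_mem_right ih)

open Finset PowerSeries in
lemma log_exp {w : A} (hw : w ∈ FA.F 1) : FA.log (FA.exp w) = w := by
  set E := FA.exp w with hE
  have hE1 : E - 1 ∈ FA.F 1 := FA.exp_sub_one_mem hw
  have hlog := FA.log_spec hE1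
  have main : ∀ M : ℕ, 2 ≤ M → FA.log E - w ∈ FA.F M := by
    intro M hM2
    set p : Polynomial K :=
      (∑ k ∈ range M, Polynomial.C ((k.factorial : K)⁻¹) * Polynomial.X ^ k) - 1 with hp
    have hPw : (Polynomial.aeval w) p = (∑ k ∈ range M, (k.factorial : K)⁻¹ • w ^ k) - 1 := by
      simp [hp, Algebra.smul_def]
    have hEp : (E - 1) - (Polynomial.aeval w) p ∈ FA.F M := by
      rw [hPw, sub_sub_sub_cancel_right]
      exact FA.exp_spec hw M
    have hpow : ∀ n : ℕ, (E - 1) ^ n - ((Polynomial.aeval w) p) ^ n ∈ FA.F M :=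
      FA.sub_pow_mem hEp
    set q : Polynomial K := ∑ n ∈ range M, Polynomial.C (cCoeff K n) * p ^ n with hq
    have haq : (Polynomial.aeval w) q
        = ∑ n ∈ range M, cCoeff K n • ((Polynomial.aeval w) p) ^ n := by
      simp [hq, Algebra.smul_def]
    have h1 : FA.log E - (Polynomial.aeval w) q ∈ FA.F M := by
      have hdiff : FA.log E - (Polynomial.aeval w) q
          = (FA.log E - ∑ n ∈ range M, cCoeff K n • (E - 1) ^ n)
            + ∑ n ∈ range M, cCoeff K n • ((E - 1) ^ n - ((Polynomial.aeval w) p) ^ n) := by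
        rw [haq]
        simp only [smul_sub, Finset.sum_sub_distrib]
        abel
      rw [hdiff]
      apply Submodule.add_mem
      · have := hlog M
        simpa only [cCoeff] using this
      · exact Submodule.sum_mem _ fun n _ => Submodule.smul_mem _ _ (hpow n)
    -- coefficients of q
    have hcoe : (↑q : PowerSeries K)
        = ∑ n ∈ range M, PowerSeries.C (cCoeff K n) * (↑p : PowerSeries K) ^ n := by
      rw [hq, ← Polynomial.coeToPowerSeries.ringHom_apply, map_sum]
      simp
    have hdvd : (X : PowerSeries K) ^ M ∣ ((↑p : PowerSeries K) - (PowerSeries.exp K - 1)) := by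
      rw [PowerSeries.X_pow_dvd_iff]
      intro m hm
      have hcp : PowerSeries.coeff m (↑p : PowerSeries K)
          = (m.factorial : K)⁻¹ - (if m = 0 then 1 else 0) := by
        rw [Polynomial.coeff_coe, hp, Polynomial.coeff_sub, Polynomial.coeff_one]
        congr 1
        rw [Polynomial.finset_sum_coeff]
        simp only [Polynomial.coeff_C_mul, Polynomial.coeff_X_pow, mul_ite, mul_one, mul_zero]
        rw [Finset.sum_ite_eq (range M) m (fun k => (k.factorial : K)⁻¹)]
        simp [Finset.mem_range.mpr hm]
      have hce : PowerSeries.coeff m (PowerSeries.exp K - 1)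
          = (m.factorial : K)⁻¹ - (if m = 0 then 1 else 0) := by
        rw [map_sub, PowerSeries.coeff_exp, PowerSeries.coeff_one, one_div,
          map_inv₀, map_natCast]
      rw [map_sub, hcp, hce, sub_self]
    have hpE : ∀ n : ℕ, ∀ m : ℕ, m < M →
        PowerSeries.coeff m ((↑p : PowerSeries K) ^ n) = aCoeff K m n := by
      intro n m hm
      have hd2 : (X : PowerSeries K) ^ M
          ∣ ((↑p : PowerSeries K) ^ n - (PowerSeries.exp K - 1) ^ n) :=
        dvd_trans hdvd (sub_dvd_pow_sub_pow _ _ n)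
      have := PowerSeries.X_pow_dvd_iff.mp hd2 m hm
      rw [map_sub, sub_eq_zero] at this
      exact this
    have hqcoeff : ∀ m : ℕ, m < M → q.coeff m = if m = 1 then (1 : K) else 0 := by
      intro m hm
      rw [← Polynomial.coeff_coe, hcoe, map_sum]
      simp only [PowerSeries.coeff_C_mul]
      rw [Finset.sum_congr rfl (fun n _ => by rw [hpE n m hm])]
      have hsub : ∑ n ∈ range (m + 1), cCoeff K n * aCoeff K m n
          = ∑ n ∈ range M, cCoeff K n * aCoeff K m n := by
        apply Finset.sum_subset (Finset.range_subset_range.mpr (by omega : m + 1 ≤ M))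
        intro n hn hn'
        have hmn : m < n := by
          simp only [Finset.mem_range] at hn hn'
          omega
        rw [aCoeff_vanish hmn, mul_zero]
      rw [← hsub, T_lemma]
    have h2 : (Polynomial.aeval w) q - w ∈ FA.F M := by
      set B := max (q.natDegree + 1) M with hB
      have hBq : q.natDegree < B := lt_of_lt_of_le (Nat.lt_succ_self _) (le_max_left _ _)
      rw [Polynomial.aeval_eq_sum_range' hBq]
      have hsplit : ∑ i ∈ range B, q.coeff i • w ^ i
          = (∑ i ∈ range M, q.coeff i • w ^ i) + ∑ i ∈ Finset.Ico M B, q.coeff i • w ^ i := by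
        rw [Finset.range_eq_Ico, Finset.range_eq_Ico]
        exact (Finset.sum_Ico_consecutive _ (Nat.zero_le M) (le_max_right _ _)).symm
      have hfirst : ∑ i ∈ range M, q.coeff i • w ^ i = w := by
        rw [Finset.sum_congr rfl (fun i hi => by
          rw [hqcoeff i (Finset.mem_range.mp hi)])]
        have hstep : ∀ i ∈ range M, (if i = 1 then (1 : K) else 0) • w ^ i
            = if i = 1 then w else 0 := by
          intro i _
          by_cases h : i = 1 <;> simp [h]
        rw [Finset.sum_congr rfl hstep, Finset.sum_ite_eq' (range M) 1 (fun _ => w)]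
        rw [if_pos (Finset.mem_range.mpr (by omega))]
      rw [hsplit, hfirst, add_sub_cancel_left]
      exact Submodule.sum_mem _ fun i hi => Submodule.smul_mem _ _
        (F_mono FA (Finset.mem_Ico.mp hi).1 (FA.pow_mem_F hw i))
    have := Submodule.add_mem _ h1 h2
    rwa [sub_add_sub_cancel] at this
  have hall : ∀ N : ℕ, FA.log E - w ∈ FA.F N := fun N =>
    F_mono FA (le_max_left N 2) (main (max N 2) (le_max_right N 2))
  exact sub_eq_zero.mp (FA.F_sep _ hall)

end CompleteFilteredAlgebra

/-- For a complete filtered algebra `A` over a field `K` of characteristic zero,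
a filtration-preserving `K`-linear map `R`, `R̃ := id - R`, and the (unique) map `χ : A₁ → A₁`
with `(χ - id)(Aₙ) ⊆ A₂ₙ` and `exp(R(χ x)) * exp(R̃(χ x)) = exp x`, the map `χ` satisfies the
simplified recursion `χ(x) = R(χ(x)) + log(exp(-R(χ(x))) * exp(x))`. -/
theorem bch_recursion_simplified {K A : Type*} [Field K] [CharZero K]
    [Ring A] [Algebra K A] (FA : CompleteFilteredAlgebra K A) (R : A →ₗ[K] A)
    (hR : ∀ n : ℕ, ∀ x ∈ FA.F n, R x ∈ FA.F n)
    (χ : FA.F 1 → FA.F 1)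
    (hdev : ∀ n : ℕ, 1 ≤ n → ∀ x : FA.F 1, (x : A) ∈ FA.F n →
      ((χ x : A) - (x : A)) ∈ FA.F (2 * n))
    (hfact : ∀ x : FA.F 1,
      FA.exp (R (χ x)) * FA.exp ((χ x : A) - R (χ x)) = FA.exp (x : A)) :
    ∀ x : FA.F 1,
      (χ x : A) = R (χ x) + FA.log (FA.exp (-(R (χ x))) * FA.exp (x : A)) := by
  intro x
  have hu1 : R (χ x) ∈ FA.F 1 := hR 1 _ (χ x).2
  have hw1 : ((χ x : A) - R (χ x)) ∈ FA.F 1 := Submodule.sub_mem _ (χ x).2 hu1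
  have key : FA.exp (-(R (χ x))) * FA.exp (x : A) = FA.exp ((χ x : A) - R (χ x)) := by
    rw [← hfact x, ← mul_assoc, FA.exp_neg_mul_exp hu1, one_mul]
  rw [key, FA.log_exp hw1, add_sub_cancel]
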